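/- Let μ be an offspring distribution on ℤ_{≥0} with μ(1) > 0, let T be a Bienaymé–Galton–Watson tree with offspring law μ, let W' be a random walk with i.i.d. nonnegative integer steps of law ν'(i) = μ(i+1)/(1-μ(0)) for i ≥ 0, and let B_n be a Binomial(n, μ(0)) random variable independent of W'. Then for every n ≥ k ≥ 1, P(T has exactly n vertices and k leaves) = (1/n)·P(B_n = k)·P(W'_{n-k} = k-1). -/

import Mathlib

set_option maxHeartbeats 1000000

/-- Rooted planar trees: a tree is a root together with an ordered (possibly empty) list of
subtrees. -/
inductive PTree where
  | node : List PTree → PTree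

namespace PTree

/-- Number of vertices. -/
def size : PTree → ℕ
  | .node ts => 1 + (ts.attach.map (fun t => size t.1)).sum
decreasing_by
  have := List.sizeOf_lt_of_mem t.2
  simp only [PTree.node.sizeOf_spec]; omega

/-- Number of leaves (vertices with no children). -/
def leaves : PTree → ℕ
  | .node [] => 1
  | .node ts => (ts.attach.map (fun t => leaves t.1)).sum
decreasing_by
  have := List.sizeOf_lt_of_mem t.2
  simp only [PTree.node.sizeOf_spec]; omega

/-- BGW weight of a tree: `∏_{u ∈ τ} μ(c_u(τ))`, the probability that a `μ`-BGW tree equals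
this tree. -/
def weight (μ : ℕ → ℝ) : PTree → ℝ
  | .node ts => μ ts.length * (ts.attach.map (fun t => weight μ t.1)).prod
decreasing_by
  have := List.sizeOf_lt_of_mem t.2
  simp only [PTree.node.sizeOf_spec]; omega

def lukas : PTree → List ℕ
  | .node ts => ts.length :: (ts.attach.map (fun t => lukas t.1)).flatten
decreasing_by
  have := List.sizeOf_lt_of_mem t.2
  simp only [PTree.node.sizeOf_spec]; omega

theorem lukas_node (ts : List PTree) :
    lukas (.node ts) = ts.length :: (ts.map lukas).flatten := by
  rw [lukas]; congr 1; simp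

theorem size_node (ts : List PTree) :
    size (.node ts) = 1 + (ts.map size).sum := by
  rw [size]; congr 1; simp

theorem weight_node (μ : ℕ → ℝ) (ts : List PTree) :
    weight μ (.node ts) = μ ts.length * (ts.map (weight μ)).prod := by
  rw [weight]; congr 1; simp

theorem leaves_node (ts : List PTree) (h : ts ≠ []) :
    leaves (.node ts) = (ts.map leaves).sum := by
  match ts, h with
  | t :: ts, _ =>
    rw [leaves]
    · simp [List.attach, List.attachWith, List.map_pmap, List.pmap_eq_map]
    · simp

/-! ### sum -/

theorem flatten_sum (ts : List PTree)
    (H : ∀ t ∈ ts, (lukas t).sum + 1 = (lukas t).length) :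
    (ts.map lukas).flatten.sum + ts.length = (ts.map lukas).flatten.length := by
  induction ts with
  | nil => simp
  | cons t ts ih =>
    have h1 := H t (by simp)
    have h2 := ih (fun t ht => H t (by simp [ht]))
    simp only [List.map_cons, List.flatten_cons, List.sum_append, List.length_append,
      List.length_cons]
    omega

theorem lukas_sum : ∀ τ : PTree, (lukas τ).sum + 1 = (lukas τ).length
  | .node ts => by
    have H : ∀ t ∈ ts, (lukas t).sum + 1 = (lukas t).length := fun t ht => lukas_sum t
    have := flatten_sum ts H
    rw [lukas_node]
    simp only [List.sum_cons, List.length_cons]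
    omega
decreasing_by
  have := List.sizeOf_lt_of_mem ht
  simp only [PTree.node.sizeOf_spec]; omega

/-! ### length -/

theorem flatten_length (ts : List PTree)
    (H : ∀ t ∈ ts, (lukas t).length = t.size) :
    (ts.map lukas).flatten.length = (ts.map size).sum := by
  induction ts with
  | nil => simp
  | cons t ts ih =>
    have h1 := H t (by simp)
    have h2 := ih (fun t ht => H t (by simp [ht]))
    simp only [List.map_cons, List.flatten_cons, List.length_append, List.sum_cons]
    omega

theorem lukas_length : ∀ τ : PTree, (lukas τ).length = τ.size
  | .node ts => by
    have H : ∀ t ∈ ts, (lukas t).length = t.size := fun t ht => lukas_length t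
    rw [lukas_node, size_node, List.length_cons, flatten_length ts H]
    omega
decreasing_by
  have := List.sizeOf_lt_of_mem ht
  simp only [PTree.node.sizeOf_spec]; omega

/-! ### count of zeros -/

theorem lukas_count : ∀ τ : PTree, (lukas τ).count 0 = τ.leaves
  | .node ts => by
    have H : ∀ t ∈ ts, (lukas t).count 0 = t.leaves := fun t ht => lukas_count t
    rw [lukas_node]
    have Hf : (ts.map lukas).flatten.count 0 = (ts.map leaves).sum := by
      clear lukas_count
      induction ts with
      | nil => simp
      | cons t ts ih =>
        have h1 := H t (by simp)
        have h2 := ih (fun t ht => H t (by simp [ht]))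
        simp only [List.map_cons, List.flatten_cons, List.count_append, List.sum_cons]
        omega
    match ts with
    | [] => simp [leaves]
    | t :: ts =>
      rw [leaves_node _ (by simp), List.count_cons]
      simp only [List.length_cons]
      rw [Hf]
      simp
decreasing_by
  have := List.sizeOf_lt_of_mem ht
  simp only [PTree.node.sizeOf_spec]; omega

/-! ### weight as product -/

theorem lukas_weight (μ : ℕ → ℝ) : ∀ τ : PTree, weight μ τ = ((lukas τ).map μ).prod
  | .node ts => by
    have H : ∀ t ∈ ts, weight μ t = ((lukas t).map μ).prod := fun t ht => lukas_weight μ t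
    rw [lukas_node, weight_node]
    have Hf : ((ts.map lukas).flatten.map μ).prod = (ts.map (weight μ)).prod := by
      clear lukas_weight
      induction ts with
      | nil => simp
      | cons t ts ih =>
        have h1 := H t (by simp)
        have h2 := ih (fun t ht => H t (by simp [ht]))
        simp only [List.map_cons, List.flatten_cons, List.map_append, List.prod_append,
          List.prod_cons]
        rw [h1, h2]
    simp only [List.map_cons, List.prod_cons]
    rw [Hf]
decreasing_by
  have := List.sizeOf_lt_of_mem ht
  simp only [PTree.node.sizeOf_spec]; omega

/-! ### prefix property -/

theorem lukas_pref : ∀ τ : PTree, ∀ j < (lukas τ).length, j ≤ ((lukas τ).take j).sum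
  | .node ts => by
    have H : ∀ t ∈ ts, ∀ j < (lukas t).length, j ≤ ((lukas t).take j).sum :=
      fun t ht => lukas_pref t
    have Hs : ∀ t ∈ ts, (lukas t).sum + 1 = (lukas t).length := fun t _ => lukas_sum t
    have Hf : ∀ j < (ts.map lukas).flatten.length,
        j < ((ts.map lukas).flatten.take j).sum + ts.length := by
      clear lukas_pref
      induction ts with
      | nil => simp
      | cons t ts ih =>
        intro j hj
        have h1 := H t (by simp)
        have hs1 := Hs t (by simp)
        have h2 := ih (fun t ht => H t (by simp [ht])) (fun t ht => Hs t (by simp [ht]))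
        simp only [List.map_cons, List.flatten_cons, List.length_append, List.length_cons] at hj ⊢
        rw [List.take_append, List.sum_append]
        rcases lt_trichotomy j (lukas t).length with hlt | heq | hgt
        · have h3 := h1 j hlt
          have : j - (lukas t).length = 0 := by omega
          rw [this]
          simp only [List.take_zero, List.sum_nil, List.length_cons]
          omega
        · rw [heq, List.take_length, Nat.sub_self]
          simp only [List.take_zero, List.sum_nil, List.length_cons]
          match ts with
          | [] => simp at hj; omega
          | _ :: _ => simp only [List.length_cons]; omega
        · rw [List.take_of_length_le (le_of_lt hgt)]
          have h4 := h2 (j - (lukas t).length) (by omega)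
          omega
    rw [lukas_node]
    intro j hj
    simp only [List.length_cons] at hj
    match j with
    | 0 => simp
    | j + 1 =>
      rw [List.take_succ_cons, List.sum_cons]
      have := Hf j (by omega)
      omega
decreasing_by
  have := List.sizeOf_lt_of_mem ht
  simp only [PTree.node.sizeOf_spec]; omega

/-! ### injectivity via stack machine -/

def build : List ℕ → List PTree → List PTree
  | [], acc => acc
  | c :: w, acc => build w (PTree.node (acc.take c) :: acc.drop c)

theorem build_append (u v : List ℕ) (acc : List PTree) :
    build (u ++ v) acc = build v (build u acc) := by
  induction u generalizing acc with
  | nil => simp [build]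
  | cons c u ih =>
    simp only [List.cons_append, build]
    exact ih _

theorem build_lukas : ∀ τ : PTree, ∀ acc : List PTree,
    build (lukas τ).reverse acc = τ :: acc
  | .node ts => by
    have H : ∀ t ∈ ts, ∀ acc, build (lukas t).reverse acc = t :: acc :=
      fun t ht => build_lukas t
    have Hf : ∀ acc, build ((ts.map lukas).flatten.reverse) acc = ts ++ acc := by
      clear build_lukas
      induction ts with
      | nil => simp [build]
      | cons t ts ih =>
        intro acc
        have h2 := ih (fun t ht => H t (by simp [ht]))
        simp only [List.map_cons, List.flatten_cons, List.reverse_append, build_append]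
        rw [h2, H t (by simp)]
        simp
    intro acc
    rw [lukas_node]
    simp only [List.reverse_cons, build_append]
    rw [Hf]
    simp only [build]
    rw [List.take_left, List.drop_left]
decreasing_by
  have := List.sizeOf_lt_of_mem ht
  simp only [PTree.node.sizeOf_spec]; omega

theorem lukas_injective : Function.Injective lukas := by
  intro τ₁ τ₂ h
  have h1 := build_lukas τ₁ []
  have h2 := build_lukas τ₂ []
  rw [h] at h1
  rw [h1] at h2
  simpa using h2

/-! ### parsing: surjectivity -/

theorem exists_forest : ∀ (w : List ℕ) (j : ℕ), w.length = w.sum + j →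
    (∀ i < w.length, i < (w.take i).sum + j) →
    ∃ ts : List PTree, ts.length = j ∧ (ts.map lukas).flatten = w
  | [], j, hlen, _ => ⟨[], by simp at hlen ⊢; omega, by simp⟩
  | c :: rest, j, hlen, hpre => by
    have hj : 0 < j := by
      have := hpre 0 (by simp)
      simpa using this
    obtain ⟨j', rfl⟩ : ∃ j', j = j' + 1 := ⟨j - 1, by omega⟩
    have hlen' : rest.length = rest.sum + (c + j') := by
      simp only [List.length_cons, List.sum_cons] at hlen
      omega
    have hpre' : ∀ i < rest.length, i < (rest.take i).sum + (c + j') := by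
      intro i hi
      have := hpre (i + 1) (by simp; omega)
      simp only [List.take_succ_cons, List.sum_cons] at this
      omega
    obtain ⟨ts', hlen'', hfl⟩ := exists_forest rest (c + j') hlen' hpre'
    refine ⟨PTree.node (ts'.take c) :: ts'.drop c, by simp; omega, ?_⟩
    simp only [List.map_cons, List.flatten_cons, lukas_node]
    rw [List.length_take, min_eq_left (by omega)]
    have : (List.map lukas (ts'.take c)).flatten ++ (List.map lukas (ts'.drop c)).flatten
        = (ts'.map lukas).flatten := by
      rw [← List.flatten_append, ← List.map_append, List.take_append_drop]
    simp only [List.cons_append, this, hfl]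

end PTree

section CycleLemma

theorem rotate_take_sum_low (w : List ℕ) (r j : ℕ) (hr : r ≤ w.length)
    (hj : j ≤ w.length - r) :
    ((w.rotate r).take j).sum + (w.take r).sum = (w.take (r + j)).sum := by
  rw [List.rotate_eq_drop_append_take hr,
    List.take_append_of_le_length (by rw [List.length_drop]; omega),
    List.take_add, List.sum_append]
  ring

theorem rotate_take_sum_high (w : List ℕ) (r j : ℕ) (hr : r ≤ w.length)
    (hj1 : w.length - r ≤ j) (hj2 : j ≤ w.length) :
    ((w.rotate r).take j).sum + (w.take r).sum
      = w.sum + (w.take (j - (w.length - r))).sum := by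
  rw [List.rotate_eq_drop_append_take hr, List.take_append,
    List.take_of_length_le (by rw [List.length_drop]; omega), List.sum_append,
    List.length_drop, List.take_take, min_eq_left (by omega)]
  have : (w.take r).sum + (w.drop r).sum = w.sum := by
    rw [← List.sum_append, List.take_append_drop]
  omega

theorem cycle_lemma (w : List ℕ) (n : ℕ) (hn : w.length = n) (hs : w.sum + 1 = n) :
    ∃! r, r < n ∧ ∀ j < n, j ≤ ((w.rotate r).take j).sum := by
  have hn0 : 0 < n := by omega
  -- minimality structure
  have hex : ∃ r, r < n ∧ ∀ m < n, (w.take r).sum + m ≤ (w.take m).sum + r := by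
    obtain ⟨a, ha, hmin⟩ := (Finset.range n).exists_min_image
      (fun j => ((w.take j).sum : ℤ) - j) ⟨0, Finset.mem_range.2 hn0⟩
    refine ⟨a, Finset.mem_range.1 ha, fun m hm => ?_⟩
    have := hmin m (Finset.mem_range.2 hm)
    omega
  classical
  obtain ⟨r₀, ⟨hr₀n, hPr₀⟩, hmin, hle⟩ :
      ∃ r₀, (r₀ < n ∧ ∀ m < n, (w.take r₀).sum + m ≤ (w.take m).sum + r₀) ∧
        (∀ ℓ < r₀, ¬ (ℓ < n ∧ ∀ m < n, (w.take ℓ).sum + m ≤ (w.take m).sum + ℓ)) ∧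
        (∀ r, (r < n ∧ ∀ m < n, (w.take r).sum + m ≤ (w.take m).sum + r) → r₀ ≤ r) :=
    ⟨Nat.find hex, Nat.find_spec hex, fun ℓ hℓ => Nat.find_min hex hℓ,
      fun r hr => Nat.find_le hr⟩
  have hstrict : ∀ ℓ < r₀, ∃ m < n, (w.take m).sum + ℓ < (w.take ℓ).sum + m := by
    intro ℓ hℓ
    have h := hmin ℓ hℓ
    push_neg at h
    rcases lt_or_ge ℓ n with h1 | h1
    · obtain ⟨m, hm1, hm2⟩ := h h1
      exact ⟨m, hm1, hm2⟩
    · omega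
  have hS1 : 0 < r₀ → (w.take r₀).sum + 1 ≤ r₀ := by
    intro h0
    obtain ⟨m, hm1, hm2⟩ := hstrict 0 h0
    have := hPr₀ m hm1
    simp only [List.take_zero, List.sum_nil] at hm2
    omega
  have hwr : r₀ ≤ w.length := by omega
  have hSn : (w.take n).sum + 1 = n := by
    rw [List.take_of_length_le (by omega)]; exact hs
  refine ⟨r₀, ⟨hr₀n, ?_⟩, ?_⟩
  · -- existence
    intro j hj
    rcases le_or_gt j (n - r₀) with hc | hc
    · have key := rotate_take_sum_low w r₀ j hwr (by omega)
      rcases lt_or_eq_of_le (show r₀ + j ≤ n by omega) with h | h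
      · have := hPr₀ (r₀ + j) h
        omega
      · rw [h] at key
        have h0 : 0 < r₀ := by omega
        have := hS1 h0
        omega
    · have key := rotate_take_sum_high w r₀ j hwr (by omega) (by omega)
      rw [hn] at key
      obtain ⟨m, hm1, hm2⟩ := hstrict (j - (n - r₀)) (by omega)
      have h3 := hPr₀ m hm1
      omega
  · -- uniqueness
    rintro r ⟨hrn, hC⟩
    have hwr' : r ≤ w.length := by omega
    have hPr : ∀ m < n, (w.take r).sum + m ≤ (w.take m).sum + r := by
      intro m hm
      rcases le_or_gt r m with h | h
      · have key := rotate_take_sum_low w r (m - r) hwr' (by omega)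
        have h2 := hC (m - r) (by omega)
        rw [show r + (m - r) = m by omega] at key
        omega
      · have key := rotate_take_sum_high w r (n - r + m) hwr' (by omega) (by omega)
        have h2 := hC (n - r + m) (by omega)
        rw [hn, show n - r + m - (n - r) = m by omega] at key
        omega
    have h1 : r₀ ≤ r := hle r ⟨hrn, hPr⟩
    rcases eq_or_lt_of_le h1 with h | h
    · exact h.symm
    · exfalso
      have key := rotate_take_sum_high w r (n - r + r₀) hwr' (by omega) (by omega)
      have h2 := hC (n - r + r₀) (by omega)
      rw [hn, show n - r + r₀ - (n - r) = r₀ by omega] at key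
      have h3 := hPr₀ r hrn
      omega

end CycleLemma

section Helpers

theorem ofFn_getD {n : ℕ} (l : List ℕ) (h : l.length = n) :
    List.ofFn (fun i : Fin n => l.getD i 0) = l := by
  subst h
  conv_rhs => rw [← List.ofFn_getElem (xs := l)]
  congr 1
  funext i
  rw [List.getD_eq_getElem l 0 i.isLt]

theorem count_ofFn (a : ℕ) : ∀ (n : ℕ) (x : Fin n → ℕ),
    (List.ofFn x).count a = (Finset.univ.filter fun i => x i = a).card
  | 0, x => by simp
  | n + 1, x => by
    rw [List.ofFn_succ, List.count_cons,
      show (List.ofFn fun i => x i.succ) = List.ofFn (x ∘ Fin.succ) from rfl,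
      count_ofFn a n (x ∘ Fin.succ)]
    rw [Finset.card_filter, Finset.card_filter, Fin.sum_univ_succ]
    simp only [Function.comp_apply]
    have : (x 0 == a) = decide (x 0 = a) := by rfl
    by_cases h : x 0 = a <;> simp [h] <;> omega

theorem getD_lt_of_sum {l : List ℕ} {n : ℕ} (i : ℕ)
    (hs : l.sum < n) : l.getD i 0 < n := by
  rcases lt_or_ge i l.length with h | h
  · rw [List.getD_eq_getElem l 0 h]
    exact lt_of_le_of_lt (List.le_sum_of_mem (List.getElem_mem h)) hs
  · rw [List.getD_eq_default l 0 h]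
    omega

end Helpers


section Fin1

open PTree

theorem trees_finite (n k : ℕ) : {τ : PTree | τ.size = n ∧ τ.leaves = k}.Finite := by
  rcases Nat.eq_zero_or_pos n with rfl | hn
  · have : {τ : PTree | τ.size = 0 ∧ τ.leaves = k} = ∅ := by
      ext τ
      simp only [Set.mem_setOf_eq, Set.mem_empty_iff_false, iff_false, not_and]
      intro h
      have := lukas_length τ
      have := lukas_sum τ
      omega
    simp [this]
  · have hsub : {τ : PTree | τ.size = n ∧ τ.leaves = k} ⊆
        lukas ⁻¹' (Set.range (fun f : Fin n → Fin n => List.ofFn (fun i => (f i : ℕ)))) := by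
      intro τ hτ
      obtain ⟨hsize, _⟩ := hτ
      have hlen : (lukas τ).length = n := by rw [lukas_length, hsize]
      have hsum : (lukas τ).sum + 1 = n := by rw [lukas_sum, hlen]
      refine ⟨fun i => ⟨(lukas τ).getD i 0, getD_lt_of_sum i (by omega)⟩, ?_⟩
      exact ofFn_getD _ hlen
    exact Set.Finite.subset
      ((Set.finite_range _).preimage (Function.Injective.injOn lukas_injective)) hsub

end Fin1


section Step2

open PTree

theorem rotate_back {l : List ℕ} {n r : ℕ} (hlen : l.length = n) (hr : r ≤ n) :
    (l.rotate r).rotate ((n - r) % n) = l := by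
  have h1 : (l.rotate r).length = n := by rw [List.length_rotate, hlen]
  conv_lhs => rw [show (n - r) % n = (n - r) % (l.rotate r).length by rw [h1]]
  rw [List.rotate_mod, List.rotate_rotate, show r + (n - r) = n by omega, ← hlen,
    List.rotate_length]

theorem mod_inj {n a b : ℕ} (ha : a < n) (hb : b < n) (hab : (n - a) % n = (n - b) % n) :
    a = b := by
  rcases Nat.eq_zero_or_pos a with rfl | ha0 <;> rcases Nat.eq_zero_or_pos b with rfl | hb0
  · rfl
  · rw [Nat.sub_zero, Nat.mod_self, Nat.mod_eq_of_lt (by omega)] at hab; omega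
  · rw [Nat.sub_zero, Nat.mod_self, Nat.mod_eq_of_lt (by omega)] at hab; omega
  · rw [Nat.mod_eq_of_lt (by omega), Nat.mod_eq_of_lt (by omega)] at hab; omega

theorem step2 (μ : ℕ → ℝ) (n k : ℕ) (hn : 0 < n) :
    (n : ℝ) * ∑ τ ∈ (trees_finite n k).toFinset, weight μ τ
      = ∑ x ∈ (Fintype.piFinset fun _ : Fin n => Finset.range n).filter
          (fun x => (∑ i, x i = n - 1) ∧ (Finset.univ.filter fun i => x i = 0).card = k),
        ∏ i, μ (x i) := by
  classical
  have h1 : ∑ p ∈ (Finset.univ : Finset (Fin n)) ×ˢ (trees_finite n k).toFinset, weight μ p.2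
      = (n : ℝ) * ∑ τ ∈ (trees_finite n k).toFinset, weight μ τ := by
    rw [Finset.sum_product]
    have h0 : ∀ x : Fin n, ∑ y ∈ (trees_finite n k).toFinset, weight μ (x, y).2
        = ∑ τ ∈ (trees_finite n k).toFinset, weight μ τ := fun _ => rfl
    rw [Finset.sum_congr rfl (fun x _ => h0 x), Finset.sum_const, Finset.card_univ,
      Fintype.card_fin, nsmul_eq_mul]
  rw [← h1]
  have hmem : ∀ τ ∈ (trees_finite n k).toFinset, τ.size = n ∧ τ.leaves = k := by
    intro τ hτ
    exact (trees_finite n k).mem_toFinset.mp hτ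
  -- facts about rotated lukas words
  have hfacts : ∀ (τ : PTree) (r : ℕ), τ.size = n → τ.leaves = k →
      ((lukas τ).rotate r).length = n ∧ ((lukas τ).rotate r).sum + 1 = n ∧
        ((lukas τ).rotate r).count 0 = k := by
    intro τ r h1 h2
    have hperm := List.rotate_perm (lukas τ) r
    refine ⟨by rw [List.length_rotate, lukas_length, h1], ?_, ?_⟩
    · rw [hperm.sum_eq, lukas_sum, lukas_length, h1]
    · rw [hperm.count_eq, lukas_count, h2]
  -- the rotation of the rotated word back to a Łukasiewicz word
  have hback : ∀ (τ : PTree) (r : ℕ), τ.size = n → r < n →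
      ((lukas τ).rotate r).rotate ((n - r) % n) = lukas τ := by
    intro τ r h1 hr
    exact rotate_back (by rw [lukas_length, h1]) (le_of_lt hr)
  have hluk : ∀ τ : PTree, τ.size = n → ∀ j < n, j ≤ ((lukas τ).take j).sum := by
    intro τ h1 j hj
    exact lukas_pref τ j (by rw [lukas_length, h1]; omega)
  refine Finset.sum_bij
    (fun (p : Fin n × PTree) _ => fun i : Fin n => ((lukas p.2).rotate (p.1 : ℕ)).getD i 0)
    ?_ ?_ ?_ ?_
  · -- maps into target
    rintro ⟨r, τ⟩ hp
    simp only [Finset.mem_product, Finset.mem_univ, true_and] at hp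
    obtain ⟨hsize, hleaf⟩ := hmem τ hp
    obtain ⟨hlen, hsum, hcount⟩ := hfacts τ r hsize hleaf
    simp only [Finset.mem_filter, Fintype.mem_piFinset, Finset.mem_range]
    refine ⟨fun i => getD_lt_of_sum _ (by omega), ?_, ?_⟩
    · rw [← List.sum_ofFn, ofFn_getD _ hlen]
      omega
    · rw [← count_ofFn, ofFn_getD _ hlen]
      exact hcount
  · -- injective
    rintro ⟨r₁, τ₁⟩ hp₁ ⟨r₂, τ₂⟩ hp₂ heq
    simp only [Finset.mem_product, Finset.mem_univ, true_and] at hp₁ hp₂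
    obtain ⟨hsize₁, hleaf₁⟩ := hmem τ₁ hp₁
    obtain ⟨hsize₂, hleaf₂⟩ := hmem τ₂ hp₂
    obtain ⟨hlen₁, hsum₁, -⟩ := hfacts τ₁ r₁ hsize₁ hleaf₁
    obtain ⟨hlen₂, hsum₂, -⟩ := hfacts τ₂ r₂ hsize₂ hleaf₂
    have hl : (lukas τ₁).rotate (r₁ : ℕ) = (lukas τ₂).rotate (r₂ : ℕ) := by
      have h2 := congrArg (fun x : Fin n → ℕ => List.ofFn x) heq
      simp only at h2
      rwa [ofFn_getD _ hlen₁, ofFn_getD _ hlen₂] at h2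
    obtain ⟨r₀, -, huniq⟩ := cycle_lemma ((lukas τ₁).rotate (r₁ : ℕ)) n hlen₁ hsum₁
    have hc₁ : (n - (r₁ : ℕ)) % n = r₀ := by
      refine huniq _ ⟨Nat.mod_lt _ hn, ?_⟩
      intro j hj
      rw [hback τ₁ r₁ hsize₁ r₁.isLt]
      exact hluk τ₁ hsize₁ j hj
    have hc₂ : (n - (r₂ : ℕ)) % n = r₀ := by
      refine huniq _ ⟨Nat.mod_lt _ hn, ?_⟩
      intro j hj
      rw [hl, hback τ₂ r₂ hsize₂ r₂.isLt]
      exact hluk τ₂ hsize₂ j hj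
    have hr : (r₁ : ℕ) = (r₂ : ℕ) := mod_inj r₁.isLt r₂.isLt (hc₁.trans hc₂.symm)
    have hτ : τ₁ = τ₂ := by
      apply lukas_injective
      rw [← hback τ₁ r₁ hsize₁ r₁.isLt, ← hback τ₂ r₂ hsize₂ r₂.isLt, hl, hr]
    exact Prod.ext (Fin.ext hr) hτ
  · -- surjective
    intro x hx
    simp only [Finset.mem_filter, Fintype.mem_piFinset, Finset.mem_range] at hx
    obtain ⟨hrange, hsumx, hcard⟩ := hx
    have hlen : (List.ofFn x).length = n := by simp
    have hsl : (List.ofFn x).sum + 1 = n := by rw [List.sum_ofFn]; omega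
    have hcl : (List.ofFn x).count 0 = k := by rw [count_ofFn]; exact hcard
    obtain ⟨r₀, ⟨hr₀n, hC⟩, -⟩ := cycle_lemma (List.ofFn x) n hlen hsl
    have hwlen : ((List.ofFn x).rotate r₀).length = n := by rw [List.length_rotate, hlen]
    have hwsum : ((List.ofFn x).rotate r₀).sum + 1 = n := by
      rw [(List.rotate_perm _ r₀).sum_eq]; exact hsl
    obtain ⟨ts, hts1, hts2⟩ := exists_forest ((List.ofFn x).rotate r₀) 1 (by omega) (by
      intro i hi
      have := hC i (by omega)
      omega)
    obtain ⟨τ, rfl⟩ := List.length_eq_one_iff.mp hts1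
    have hτw : lukas τ = (List.ofFn x).rotate r₀ := by simpa using hts2
    have hsize : τ.size = n := by rw [← lukas_length, hτw, hwlen]
    have hleaf : τ.leaves = k := by
      rw [← lukas_count, hτw, (List.rotate_perm _ r₀).count_eq, hcl]
    refine ⟨(⟨(n - r₀) % n, Nat.mod_lt _ hn⟩, τ), ?_, ?_⟩
    · simp only [Finset.mem_product, Finset.mem_univ, true_and, Set.Finite.mem_toFinset]
      exact ⟨hsize, hleaf⟩
    · have hrot : (lukas τ).rotate ((n - r₀) % n) = List.ofFn x := by
        rw [hτw]
        exact rotate_back hlen (le_of_lt hr₀n)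
      funext i
      simp only [hrot]
      rw [List.getD_eq_getElem _ _ (by simp [i.isLt]), List.getElem_ofFn]
  · -- values
    rintro ⟨r, τ⟩ hp
    simp only [Finset.mem_product, Finset.mem_univ, true_and] at hp
    obtain ⟨hsize, hleaf⟩ := hmem τ hp
    obtain ⟨hlen, -, -⟩ := hfacts τ r hsize hleaf
    rw [lukas_weight μ τ]
    have h3 : (∏ i : Fin n, μ (((lukas τ).rotate (r : ℕ)).getD (i : ℕ) 0))
        = (((lukas τ).rotate (r : ℕ)).map μ).prod := by
      conv_rhs => rw [← ofFn_getD _ hlen]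
      rw [List.map_ofFn, List.prod_ofFn]
      rfl
    rw [h3]
    exact (((List.rotate_perm (lukas τ) (r : ℕ)).map μ).prod_eq).symm

end Step2


section Step3

variable {n m : ℕ}

/-- Reconstruct a word from its zero set `A` and the positive entries `y` listed along `Aᶜ`. -/
noncomputable def mkx (A : Finset (Fin n)) (h : Aᶜ.card = m) (y : Fin m → ℕ) : Fin n → ℕ :=
  fun i => if hi : i ∈ A then 0
    else y ((Aᶜ.orderIsoOfFin h).symm ⟨i, Finset.mem_compl.mpr hi⟩) + 1

theorem mkx_mem (A : Finset (Fin n)) (h : Aᶜ.card = m) (y : Fin m → ℕ) {i : Fin n}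
    (hi : i ∈ A) : mkx A h y i = 0 := dif_pos hi

theorem mkx_zero_iff (A : Finset (Fin n)) (h : Aᶜ.card = m) (y : Fin m → ℕ) (i : Fin n) :
    mkx A h y i = 0 ↔ i ∈ A := by
  unfold mkx
  by_cases hi : i ∈ A <;> simp [hi]

theorem mkx_apply_iso (A : Finset (Fin n)) (h : Aᶜ.card = m) (y : Fin m → ℕ) (j : Fin m) :
    mkx A h y ((Aᶜ.orderIsoOfFin h) j : Fin n) = y j + 1 := by
  have hmem : ((Aᶜ.orderIsoOfFin h) j : Fin n) ∈ Aᶜ := ((Aᶜ.orderIsoOfFin h) j).2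
  have hni : ¬ ((Aᶜ.orderIsoOfFin h) j : Fin n) ∈ A := Finset.mem_compl.mp hmem
  unfold mkx
  rw [dif_neg hni]
  congr 1
  have : (⟨((Aᶜ.orderIsoOfFin h) j : Fin n), Finset.mem_compl.mpr hni⟩ :
      {x // x ∈ Aᶜ}) = (Aᶜ.orderIsoOfFin h) j := Subtype.ext rfl
  rw [this]
  exact congrArg y ((Aᶜ.orderIsoOfFin h).symm_apply_apply j)

theorem sum_compl_mkx (A : Finset (Fin n)) (h : Aᶜ.card = m) (y : Fin m → ℕ) :
    ∑ i ∈ Aᶜ, mkx A h y i = ∑ j : Fin m, (y j + 1) := by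
  rw [← Finset.sum_coe_sort Aᶜ (mkx A h y),
    ← Equiv.sum_comp (Aᶜ.orderIsoOfFin h).toEquiv (fun i => mkx A h y (i : Fin n))]
  exact Finset.sum_congr rfl (fun j _ => mkx_apply_iso A h y j)

theorem sum_mkx (A : Finset (Fin n)) (h : Aᶜ.card = m) (y : Fin m → ℕ) :
    ∑ i, mkx A h y i = ∑ j : Fin m, (y j + 1) := by
  rw [← Finset.sum_add_sum_compl A, Finset.sum_eq_zero (fun i hi => mkx_mem A h y hi),
    zero_add, sum_compl_mkx]

theorem prod_mkx (f : ℕ → ℝ) (A : Finset (Fin n)) (h : Aᶜ.card = m) (y : Fin m → ℕ) :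
    ∏ i, f (mkx A h y i) = f 0 ^ A.card * ∏ j : Fin m, f (y j + 1) := by
  rw [← Finset.prod_mul_prod_compl A]
  congr 1
  · rw [Finset.prod_congr rfl (fun i hi => by rw [mkx_mem A h y hi]), Finset.prod_const]
  · rw [← Finset.prod_coe_sort Aᶜ (fun i => f (mkx A h y i)),
      ← Equiv.prod_comp (Aᶜ.orderIsoOfFin h).toEquiv (fun i => f (mkx A h y (i : Fin n)))]
    exact Finset.prod_congr rfl (fun j _ => congrArg f (mkx_apply_iso A h y j))

theorem step3 (μ : ℕ → ℝ) (n k : ℕ) (hk : 1 ≤ k) (hkn : k ≤ n) :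
    (∑ x ∈ (Fintype.piFinset fun _ : Fin n => Finset.range n).filter
        (fun x => (∑ i, x i = n - 1) ∧ (Finset.univ.filter fun i => x i = 0).card = k),
      ∏ i, μ (x i))
    = (n.choose k : ℝ) * μ 0 ^ k *
      ∑ y ∈ (Fintype.piFinset fun _ : Fin (n - k) => Finset.range k).filter
          (fun y => ∑ i, y i = k - 1),
        ∏ i : Fin (n - k), μ (y i + 1) := by
  classical
  have hcompl : ∀ A : Finset (Fin n), A ∈ Finset.powersetCard k Finset.univ →
      Aᶜ.card = n - k := by
    intro A hA
    rw [Finset.card_compl, Fintype.card_fin, (Finset.mem_powersetCard_univ.mp hA)]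
  have hstep : ∑ p ∈ (Finset.powersetCard k (Finset.univ : Finset (Fin n))) ×ˢ
        ((Fintype.piFinset fun _ : Fin (n - k) => Finset.range k).filter
          (fun y => ∑ i, y i = k - 1)),
      (μ 0 ^ k * ∏ i : Fin (n - k), μ (p.2 i + 1))
      = ∑ x ∈ (Fintype.piFinset fun _ : Fin n => Finset.range n).filter
          (fun x => (∑ i, x i = n - 1) ∧ (Finset.univ.filter fun i => x i = 0).card = k),
        ∏ i, μ (x i) := by
    refine Finset.sum_bij
      (fun p hp => mkx p.1 (hcompl p.1 (Finset.mem_product.mp hp).1) p.2) ?_ ?_ ?_ ?_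
    · rintro ⟨A, y⟩ hp
      obtain ⟨hA, hy⟩ := Finset.mem_product.mp hp
      have hAcard : A.card = k := Finset.mem_powersetCard_univ.mp hA
      simp only [Finset.mem_filter, Fintype.mem_piFinset, Finset.mem_range] at hy
      obtain ⟨hyr, hysum⟩ := hy
      have hsum : ∑ i, mkx A (hcompl A hA) y i = n - 1 := by
        rw [sum_mkx, Finset.sum_add_distrib, Finset.sum_const, Finset.card_univ,
          Fintype.card_fin, smul_eq_mul, mul_one, hysum]
        omega
      simp only [Finset.mem_filter, Fintype.mem_piFinset, Finset.mem_range]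
      refine ⟨?_, hsum, ?_⟩
      · intro i
        by_cases hi : i ∈ A
        · rw [mkx_mem A _ y hi]; omega
        · rcases lt_or_eq_of_le hkn with hlt | heq
          · unfold mkx
            rw [dif_neg hi]
            have := hyr ((Aᶜ.orderIsoOfFin (hcompl A hA)).symm ⟨i, Finset.mem_compl.mpr hi⟩)
            omega
          · exfalso
            apply hi
            have : A = Finset.univ := Finset.eq_univ_of_card A (by rw [hAcard, Fintype.card_fin, heq])
            rw [this]
            exact Finset.mem_univ i
      · have : (Finset.univ.filter fun i => mkx A (hcompl A hA) y i = 0) = A := by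
          ext i
          simp [mkx_zero_iff]
        rw [this, hAcard]
    · rintro ⟨A₁, y₁⟩ hp₁ ⟨A₂, y₂⟩ hp₂ heq
      obtain ⟨hA₁, hy₁⟩ := Finset.mem_product.mp hp₁
      obtain ⟨hA₂, hy₂⟩ := Finset.mem_product.mp hp₂
      have heq' : ∀ i, mkx A₁ (hcompl A₁ hA₁) y₁ i = mkx A₂ (hcompl A₂ hA₂) y₂ i :=
        fun i => congrFun heq i
      have hAeq : A₁ = A₂ := by
        ext i
        rw [← mkx_zero_iff A₁ (hcompl A₁ hA₁) y₁ i, ← mkx_zero_iff A₂ (hcompl A₂ hA₂) y₂ i]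
        rw [heq' i]
      subst hAeq
      have hyeq : y₁ = y₂ := by
        funext j
        have h1 := mkx_apply_iso A₁ (hcompl A₁ hA₁) y₁ j
        rw [heq' _] at h1
        have h2 : y₁ j + 1 = y₂ j + 1 :=
          h1.symm.trans (mkx_apply_iso A₁ (hcompl A₁ hA₁) y₂ j)
        omega
      rw [hyeq]
    · intro x hx
      simp only [Finset.mem_filter, Fintype.mem_piFinset, Finset.mem_range] at hx
      obtain ⟨hxr, hxsum, hxcard⟩ := hx
      set A : Finset (Fin n) := Finset.univ.filter (fun i => x i = 0) with hA
      have hAmem : A ∈ Finset.powersetCard k Finset.univ :=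
        Finset.mem_powersetCard_univ.mpr hxcard
      have hAc : Aᶜ.card = n - k := hcompl A hAmem
      have hxA : ∀ i ∈ A, x i = 0 := by
        intro i hi
        exact (Finset.mem_filter.mp hi).2
      have hxAc : ∀ i : Fin n, i ∉ A → x i ≠ 0 := by
        intro i hi
        simp only [hA, Finset.mem_filter, Finset.mem_univ, true_and] at hi
        exact hi
      set σ := Aᶜ.orderIsoOfFin hAc with hσ
      set y : Fin (n - k) → ℕ := fun j => x (σ j : Fin n) - 1 with hy
      have hyval : ∀ j, y j + 1 = x (σ j : Fin n) := by
        intro j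
        have h5 : (σ j : Fin n) ∉ A := Finset.mem_compl.mp (σ j).2
        have h6 := hxAc _ h5
        simp only [hy]
        omega
      have hsumAc : ∑ i ∈ Aᶜ, x i = n - 1 := by
        have h2 : ∑ i ∈ A, x i + ∑ i ∈ Aᶜ, x i = n - 1 := by
          rw [Finset.sum_add_sum_compl A x]; exact hxsum
        have h3 : ∑ i ∈ A, x i = 0 := Finset.sum_eq_zero hxA
        omega
      have hsumy1 : ∑ j : Fin (n - k), (y j + 1) = n - 1 := by
        have e1 : ∑ j : Fin (n - k), (y j + 1)
            = ∑ j : Fin (n - k), x ((σ.toEquiv j : {a // a ∈ Aᶜ}) : Fin n) :=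
          Finset.sum_congr rfl (fun j _ => hyval j)
        rw [e1, Equiv.sum_comp σ.toEquiv (fun i : {a // a ∈ Aᶜ} => x (i : Fin n)),
          Finset.sum_coe_sort Aᶜ x, hsumAc]
      have hsumy : ∑ j : Fin (n - k), y j = k - 1 := by
        have h4 := Finset.sum_add_distrib (s := (Finset.univ : Finset (Fin (n - k))))
          (f := y) (g := fun _ => 1)
        rw [Finset.sum_const, Finset.card_univ, Fintype.card_fin, smul_eq_mul, mul_one] at h4
        rw [h4] at hsumy1
        omega
      have hyr : ∀ j, y j < k := by
        intro j
        have h5 : y j ≤ ∑ j : Fin (n - k), y j :=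
          Finset.single_le_sum (fun j _ => Nat.zero_le (y j)) (Finset.mem_univ j)
        omega
      refine ⟨(A, y), Finset.mem_product.mpr ⟨hAmem, ?_⟩, ?_⟩
      · simp only [Finset.mem_filter, Fintype.mem_piFinset, Finset.mem_range]
        exact ⟨hyr, hsumy⟩
      · funext i
        show mkx A (hcompl A hAmem) y i = x i
        by_cases hi : i ∈ A
        · rw [mkx_mem A _ y hi, hxA i hi]
        · have h6 := hyval (σ.symm ⟨i, Finset.mem_compl.mpr hi⟩)
          rw [OrderIso.apply_symm_apply] at h6
          unfold mkx
          rw [dif_neg hi]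
          exact h6
    · rintro ⟨A, y⟩ hp
      obtain ⟨hA, hy⟩ := Finset.mem_product.mp hp
      have hAcard : A.card = k := Finset.mem_powersetCard_univ.mp hA
      rw [prod_mkx μ A (hcompl A hA) y, hAcard]
  rw [← hstep, Finset.sum_product]
  have h0 : ∀ A : Finset (Fin n), (∑ y ∈ (Fintype.piFinset fun _ : Fin (n - k) =>
        Finset.range k).filter (fun y => ∑ i, y i = k - 1),
        (μ 0 ^ k * ∏ i : Fin (n - k), μ ((A, y).2 i + 1)))
      = ∑ y ∈ (Fintype.piFinset fun _ : Fin (n - k) => Finset.range k).filter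
          (fun y => ∑ i, y i = k - 1), (μ 0 ^ k * ∏ i : Fin (n - k), μ (y i + 1)) :=
    fun _ => rfl
  rw [Finset.sum_congr rfl (fun A _ => h0 A), Finset.sum_const, Finset.card_powersetCard,
    Finset.card_univ, Fintype.card_fin, nsmul_eq_mul, ← Finset.mul_sum, ← mul_assoc]

end Step3

open scoped Classical

/-- For an offspring distribution `μ` with `μ(1) > 0`, a `μ`-BGW tree `T`, the walk `W'`
with i.i.d. steps of law `ν'(i) = μ(i+1)/(1-μ(0))`, and `B_n ~ Binomial(n, μ(0))`:
`P(T has n vertices and k leaves) = (1/n)·P(B_n = k)·P(W'_{n-k} = k-1)`. -/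
theorem stmt_12 (μ : ℕ → ℝ) (hpos : ∀ i, 0 ≤ μ i) (hsum : HasSum μ 1)
    (hμ1 : 0 < μ 1) (n k : ℕ) (hk : 1 ≤ k) (hkn : k ≤ n) :
    (∑' τ : PTree, if τ.size = n ∧ τ.leaves = k then τ.weight μ else 0)
      = (1 / (n : ℝ)) * ((Nat.choose n k : ℝ) * μ 0 ^ k * (1 - μ 0) ^ (n - k)) *
        (∑ y ∈ (Fintype.piFinset fun _ : Fin (n - k) => Finset.range k).filter
            (fun y => ∑ i, y i = k - 1),
          ∏ i : Fin (n - k), μ (y i + 1) / (1 - μ 0)) := by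
  classical
  have hn : 0 < n := lt_of_lt_of_le hk hkn
  have hn0 : (n : ℝ) ≠ 0 := Nat.cast_ne_zero.mpr (by omega)
  have hμ0 : μ 0 < 1 := by
    have h1 : μ 0 + μ 1 ≤ 1 := by
      have h2 := sum_le_hasSum ({0, 1} : Finset ℕ) (fun i _ => hpos i) hsum
      rwa [Finset.sum_pair (by norm_num)] at h2
    linarith
  have h1μ : (1 : ℝ) - μ 0 ≠ 0 := by linarith
  have h1μp : ((1 : ℝ) - μ 0) ^ (n - k) ≠ 0 := pow_ne_zero _ h1μ
  have hts : (∑' τ : PTree, if τ.size = n ∧ τ.leaves = k then τ.weight μ else 0)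
      = ∑ τ ∈ (trees_finite n k).toFinset, PTree.weight μ τ := by
    have he := tsum_eq_sum (L := SummationFilter.unconditional PTree) (s := (trees_finite n k).toFinset)
      (f := fun τ : PTree => if τ.size = n ∧ τ.leaves = k then PTree.weight μ τ else 0)
      (fun τ hτ => if_neg (fun h => hτ ((trees_finite n k).mem_toFinset.mpr h)))
    rw [he]
    exact Finset.sum_congr rfl (fun τ hτ => if_pos ((trees_finite n k).mem_toFinset.mp hτ))
  have h2 := step2 μ n k hn
  have h3 := step3 μ n k hk hkn
  have h5 : ∑ τ ∈ (trees_finite n k).toFinset, PTree.weight μ τ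
      = (1 / (n : ℝ)) * ((n.choose k : ℝ) * μ 0 ^ k *
        ∑ y ∈ (Fintype.piFinset fun _ : Fin (n - k) => Finset.range k).filter
            (fun y => ∑ i, y i = k - 1),
          ∏ i : Fin (n - k), μ (y i + 1)) := by
    rw [← h3, ← h2]
    field_simp
  have h4 : (∑ y ∈ (Fintype.piFinset fun _ : Fin (n - k) => Finset.range k).filter
        (fun y => ∑ i, y i = k - 1),
      ∏ i : Fin (n - k), μ (y i + 1) / (1 - μ 0))
      = (∑ y ∈ (Fintype.piFinset fun _ : Fin (n - k) => Finset.range k).filter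
            (fun y => ∑ i, y i = k - 1),
          ∏ i : Fin (n - k), μ (y i + 1)) / (1 - μ 0) ^ (n - k) := by
    rw [Finset.sum_div]
    refine Finset.sum_congr rfl (fun y _ => ?_)
    rw [Finset.prod_div_distrib, Finset.prod_const, Finset.card_univ, Fintype.card_fin]
  rw [hts, h5, h4]
  field_simp
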